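/- arXiv:math/0505301 — 2 statements merged into one kernel-verified Lean document; each statement's English description precedes it below -/
import Mathlib

section
/- The hyperplane H = { x ∈ ℝ^m : ⟨x, u⟩ = 1 }, where u_i = √i − √(i−1), is a supporting hyperplane of the polytope C_m = conv(B_m): every point of C_m satisfies ⟨x, u⟩ ≤ 1, and the points v_1, …, v_m of C_m lie on H. -/
open scoped RealInnerProductSpace BigOperators
noncomputable section

def A (m : ℕ) : Set (EuclideanSpace ℝ (Fin m)) :=
  {v | (∀ i, v i = -1 ∨ v i = 0 ∨ v i = 1) ∧ v ≠ 0}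

def B (m : ℕ) : Set (EuclideanSpace ℝ (Fin m)) :=
  (fun v => ‖v‖⁻¹ • v) '' A m

def vk (m : ℕ) (k : Fin m) : EuclideanSpace ℝ (Fin m) :=
  WithLp.toLp 2 (fun i => if i ≤ k then (Real.sqrt ((k : ℕ) + 1))⁻¹ else 0)

def u (m : ℕ) : EuclideanSpace ℝ (Fin m) :=
  WithLp.toLp 2 (fun i => Real.sqrt ((i : ℕ) + 1) - Real.sqrt (i : ℕ))

open Real Finset

theorem sqrt_diff_anti' {n m : ℕ} (h : n ≤ m) : sqrt (m+1) - sqrt m ≤ sqrt (n+1) - sqrt n := by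
  have hnm : (n:ℝ) ≤ m := Nat.cast_le.2 h
  have h1 : sqrt n ≤ sqrt m := Real.sqrt_le_sqrt hnm
  have h2 : sqrt ((n:ℝ)+1) ≤ sqrt ((m:ℝ)+1) := Real.sqrt_le_sqrt (by linarith)
  have a0 : (0:ℝ) ≤ sqrt n := Real.sqrt_nonneg _
  have b0 : 0 < sqrt ((n:ℝ)+1) := Real.sqrt_pos.2 (by positivity)
  have e1 : (sqrt ((n:ℝ)+1) - sqrt n) * (sqrt ((n:ℝ)+1) + sqrt n) = 1 := by
    have hb := Real.sq_sqrt (show (0:ℝ) ≤ (n:ℝ)+1 by positivity)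
    have ha := Real.sq_sqrt (show (0:ℝ) ≤ (n:ℝ) by positivity)
    linear_combination hb - ha
  have e2 : (sqrt ((m:ℝ)+1) - sqrt m) * (sqrt ((m:ℝ)+1) + sqrt m) = 1 := by
    have hb := Real.sq_sqrt (show (0:ℝ) ≤ (m:ℝ)+1 by positivity)
    have ha := Real.sq_sqrt (show (0:ℝ) ≤ (m:ℝ) by positivity)
    linear_combination hb - ha
  have hd : 0 ≤ sqrt ((m:ℝ)+1) - sqrt m := by
    have : sqrt (m:ℝ) ≤ sqrt ((m:ℝ)+1) := Real.sqrt_le_sqrt (by linarith)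
    linarith
  nlinarith [mul_nonneg hd (by linarith : (0:ℝ) ≤ (sqrt ((m:ℝ)+1) + sqrt m) - (sqrt ((n:ℝ)+1) + sqrt n))]

theorem sum_sqrt_diff_le' (S : Finset ℕ) : ∑ i ∈ S, (sqrt (i+1) - sqrt i) ≤ sqrt S.card := by
  induction S using Finset.induction_on_max with
  | empty => simp
  | insert a S ha ih =>
    have hna : a ∉ S := fun hmem => lt_irrefl a (ha a hmem)
    have hcard : S.card ≤ a := by
      have : S ⊆ Finset.range a := fun x hx => Finset.mem_range.2 (ha x hx)
      simpa using Finset.card_le_card this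
    rw [Finset.sum_insert hna, Finset.card_insert_of_notMem hna]
    have h1 : sqrt (a+1) - sqrt a ≤ sqrt (S.card+1) - sqrt S.card := sqrt_diff_anti' hcard
    push_cast
    push_cast at ih
    linarith [ih]

theorem inner_eq' (m : ℕ) (x y : EuclideanSpace ℝ (Fin m)) : ⟪x, y⟫ = ∑ i, x i * y i := by
  simp [PiLp.inner_apply, RCLike.inner_apply, starRingEnd_apply, mul_comm]

theorem u_nonneg' (m : ℕ) (i : Fin m) : 0 ≤ u m i := by
  have : sqrt (i:ℝ) ≤ sqrt ((i:ℝ)+1) := Real.sqrt_le_sqrt (by linarith)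
  simpa [u] using this

theorem A_inner_le' (m : ℕ) (v : EuclideanSpace ℝ (Fin m)) (hv : v ∈ A m) :
    ⟪v, u m⟫ ≤ ‖v‖ ∧ 1 ≤ ‖v‖ := by
  classical
  obtain ⟨hval, hne⟩ := hv
  set S : Finset (Fin m) := Finset.univ.filter (fun i => v i ≠ 0) with hS
  have hsum : ⟪v, u m⟫ ≤ ∑ i ∈ S, u m i := by
    rw [inner_eq', ← Finset.sum_filter_add_sum_filter_not Finset.univ (fun i => v i ≠ 0)]
    have h2 : ∑ i ∈ Finset.univ.filter (fun i => ¬ v i ≠ 0), v i * u m i = 0 := by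
      apply Finset.sum_eq_zero; intro i hi
      simp only [Finset.mem_filter, not_not] at hi
      rw [hi.2]; ring
    rw [h2, add_zero]
    apply Finset.sum_le_sum
    intro i hi
    have h1 : v i ≤ 1 := by rcases hval i with h|h|h <;> rw [h] <;> norm_num
    nlinarith [u_nonneg' m i]
  have hcard : ∑ i ∈ S, u m i ≤ sqrt S.card := by
    have : ∑ i ∈ S, u m i = ∑ j ∈ S.image Fin.val, (sqrt (j+1) - sqrt j) := by
      rw [Finset.sum_image (fun a _ b _ h => Fin.val_injective h)]
      rfl
    rw [this]
    have hc : (S.image Fin.val).card = S.card :=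
      Finset.card_image_of_injective _ Fin.val_injective
    calc _ ≤ sqrt ((S.image Fin.val).card) := sum_sqrt_diff_le' _
      _ = _ := by rw [hc]
  have hnorm : ‖v‖ = sqrt S.card := by
    rw [EuclideanSpace.norm_eq]
    congr 1
    have : ∑ i, v i ^ 2 = ∑ i ∈ S, (1:ℝ) := by
      rw [Finset.sum_filter]
      apply Finset.sum_congr rfl
      intro i _
      rcases hval i with h|h|h <;> simp [h]
    calc ∑ i, ‖v i‖ ^ 2 = ∑ i, v i ^ 2 := by simp [sq_abs, Real.norm_eq_abs]
      _ = S.card := by rw [this]; simp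
  have hSne : S.Nonempty := by
    rcases Function.ne_iff.1 (show v.ofLp ≠ 0 from fun h' => hne (by ext i; simp [h'])) with ⟨i, hi⟩
    exact ⟨i, Finset.mem_filter.2 ⟨Finset.mem_univ _, hi⟩⟩
  have h1card : 1 ≤ (S.card : ℝ) := by exact_mod_cast Finset.card_pos.2 hSne
  constructor
  · rw [hnorm]; linarith
  · rw [hnorm]; calc (1:ℝ) = sqrt 1 := by simp
      _ ≤ sqrt S.card := Real.sqrt_le_sqrt h1card

theorem B_inner_le' (m : ℕ) (b : EuclideanSpace ℝ (Fin m)) (hb : b ∈ B m) : ⟪b, u m⟫ ≤ 1 := by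
  obtain ⟨v, hv, rfl⟩ := hb
  obtain ⟨h1, h2⟩ := A_inner_le' m v hv
  rw [real_inner_smul_left]
  have hn : 0 < ‖v‖ := by linarith
  rw [inv_mul_le_iff₀ hn, mul_one]
  exact h1

theorem hull_le' (m : ℕ) : ∀ x ∈ convexHull ℝ (B m), ⟪x, u m⟫ ≤ 1 := by
  intro x hx
  have hconv : Convex ℝ {y : EuclideanSpace ℝ (Fin m) | ⟪y, u m⟫ ≤ 1} := by
    apply convex_halfSpace_le
    exact ⟨fun a b => inner_add_left a b _, fun r a => real_inner_smul_left a _ r⟩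
  exact convexHull_min (fun b hb => B_inner_le' m b hb) hconv hx

theorem vk_mem' (m : ℕ) (k : Fin m) : vk m k ∈ convexHull ℝ (B m) := by
  classical
  set w : EuclideanSpace ℝ (Fin m) := WithLp.toLp 2 (fun i => if i ≤ k then (1:ℝ) else 0) with hw
  have hwA : w ∈ A m := by
    constructor
    · intro i; by_cases h : i ≤ k <;> simp [hw, h]
    · intro h
      have : w k = 0 := by rw [h]; rfl
      simp [hw] at this
  have hwnorm : ‖w‖ = sqrt ((k:ℕ)+1) := by
    rw [EuclideanSpace.norm_eq]
    congr 1
    have h1 : ∑ i, ‖w i‖ ^ 2 = ∑ i ∈ Finset.univ.filter (fun i => i ≤ k), (1:ℝ) := by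
      rw [Finset.sum_filter]
      apply Finset.sum_congr rfl
      intro i _
      by_cases h : i ≤ k <;> simp [hw, h]
    have h2 : Finset.univ.filter (fun i => i ≤ k) = Finset.Iic k := by
      ext i; simp
    rw [h1, h2]
    simp [Fin.card_Iic]
  have : ‖w‖⁻¹ • w = vk m k := by
    ext i
    rw [PiLp.smul_apply, hwnorm]
    simp only [PiLp.smul_apply, smul_eq_mul, hw, hwnorm, vk]
    by_cases h : i ≤ k <;> simp [h]
  rw [← this]
  exact subset_convexHull ℝ _ ⟨w, hwA, rfl⟩

theorem vk_inner' (m : ℕ) (k : Fin m) : ⟪vk m k, u m⟫ = 1 := by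
  classical
  rw [inner_eq']
  have hsplit : ∀ i : Fin m, vk m k i * u m i =
      (fun j : ℕ => if j ≤ (k:ℕ) then (sqrt ((k:ℕ)+1))⁻¹ * (sqrt ((j:ℕ)+1) - sqrt j) else 0) i.val := by
    intro i
    by_cases h : i ≤ k
    · have h' : (i:ℕ) ≤ (k:ℕ) := h
      simp [vk, u, h, h']
    · have h' : ¬ (i:ℕ) ≤ (k:ℕ) := h
      simp [vk, u, h, h']
  rw [Finset.sum_congr rfl (fun i _ => hsplit i)]
  rw [Fin.sum_univ_eq_sum_range (fun j : ℕ => if j ≤ (k:ℕ) then (sqrt ((k:ℕ)+1))⁻¹ * (sqrt ((j:ℕ)+1) - sqrt j) else 0) m]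
  have hsub : Finset.range ((k:ℕ)+1) ⊆ Finset.range m := by
    apply Finset.range_subset_range.2; exact k.isLt
  rw [← Finset.sum_subset hsub (fun x hx hnx => ?_)]
  · have : ∀ j ∈ Finset.range ((k:ℕ)+1),
        (if j ≤ (k:ℕ) then (sqrt ((k:ℕ)+1))⁻¹ * (sqrt ((j:ℕ)+1) - sqrt j) else 0)
        = (sqrt ((k:ℕ)+1))⁻¹ * (sqrt ((j:ℕ)+1) - sqrt j) := by
      intro j hj
      rw [if_pos (Nat.lt_succ_iff.1 (Finset.mem_range.1 hj))]
    rw [Finset.sum_congr rfl this, ← Finset.mul_sum]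
    have htel : ∑ j ∈ Finset.range ((k:ℕ)+1), (sqrt ((j:ℕ)+1) - sqrt j) = sqrt ((k:ℕ)+1) := by
      have := Finset.sum_range_sub (fun j : ℕ => sqrt j) ((k:ℕ)+1)
      simp only [Nat.cast_add, Nat.cast_one, Nat.cast_zero, Real.sqrt_zero, sub_zero] at this ⊢
      convert this using 2
    rw [htel, inv_mul_cancel₀]
    positivity
  · rw [if_neg (by simpa using Finset.mem_range.not.1 hnx)]

theorem stmt9 (m : ℕ) (hm : 2 ≤ m) :
    (∀ x ∈ convexHull ℝ (B m), ⟪x, u m⟫ ≤ 1) ∧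
    (∀ k : Fin m, vk m k ∈ convexHull ℝ (B m) ∧ ⟪vk m k, u m⟫ = 1) := by
  exact ⟨hull_le' m, fun k => ⟨vk_mem' m k, vk_inner' m k⟩⟩
end
end

section
/- With s_m the inradius of C_m = conv(B_m), one has s_m·√(log m) → 2 as m → ∞; i.e., s_m is asymptotically 2/√(log m). -/
open scoped BigOperators
open Finset Real
noncomputable section

def s (m : ℕ) : ℝ :=
  sSup {r : ℝ | 0 ≤ r ∧ Metric.closedBall (0 : EuclideanSpace ℝ (Fin m)) r ⊆ convexHull ℝ (B m)}

lemma abel_id (f G : ℕ → ℝ) (n : ℕ) :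
    ∑ k ∈ range n, (f k - f (k+1)) * G (k+1)
      = ∑ k ∈ range n, f k * (G (k+1) - G k) - f n * G n + f 0 * G 0 := by
  induction n with
  | zero => simp
  | succ n ih => rw [Finset.sum_range_succ, Finset.sum_range_succ, ih]; ring

lemma harmonic_le (n : ℕ) (hn : 1 ≤ n) :
    ∑ k ∈ range n, (1:ℝ)/(k+1) ≤ 1 + Real.log n := by
  induction n with
  | zero => omega
  | succ n ih =>
    rcases Nat.eq_or_lt_of_le hn with h | h
    · simp [← h]
    · have hn1 : 1 ≤ n := by omega
      have hnp : (0:ℝ) < n := by positivity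
      have key : (1:ℝ)/(n+1) ≤ Real.log (n+1) - Real.log n := by
        have h1 : Real.log ((n:ℝ)/(n+1)) ≤ (n:ℝ)/(n+1) - 1 :=
          Real.log_le_sub_one_of_pos (by positivity)
        rw [Real.log_div (ne_of_gt hnp) (by positivity)] at h1
        have : (n:ℝ)/(n+1) - 1 = -(1/(n+1)) := by field_simp; ring
        rw [this] at h1; linarith
      rw [Finset.sum_range_succ]
      push_cast
      have := ih hn1
      push_cast at this
      linarith

lemma le_harmonic (n : ℕ) :
    Real.log (n+1) ≤ ∑ k ∈ range n, (1:ℝ)/(k+1) := by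
  induction n with
  | zero => simp
  | succ n ih =>
    have key : Real.log (n+1+1) - Real.log (n+1) ≤ 1/(n+1) := by
      have h1 : Real.log (((n:ℝ)+2)/(n+1)) ≤ ((n:ℝ)+2)/(n+1) - 1 :=
        Real.log_le_sub_one_of_pos (by positivity)
      rw [Real.log_div (by positivity) (by positivity)] at h1
      have h2 : ((n:ℝ)+2)/(n+1) - 1 = 1/(n+1) := by field_simp; ring
      have h3 : Real.log ((n:ℝ)+1+1) = Real.log ((n:ℝ)+2) := by ring_nf
      rw [h3]; linarith
    rw [Finset.sum_range_succ]
    push_cast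
    push_cast at key ih
    linarith

def bb (k : ℕ) : ℝ := Real.sqrt (k+1) - Real.sqrt k

lemma bb_eq (k : ℕ) : bb k = 1/(Real.sqrt (k+1) + Real.sqrt k) := by
  have h1 : (0:ℝ) < Real.sqrt (k+1) + Real.sqrt k := by
    have := Real.sqrt_pos.mpr (show (0:ℝ) < k+1 by positivity)
    have := Real.sqrt_nonneg (k:ℝ)
    linarith
  rw [eq_div_iff (ne_of_gt h1)]
  have h2 : Real.sqrt (k+1) ^ 2 = (k:ℝ)+1 := Real.sq_sqrt (by positivity)
  have h3 : Real.sqrt (k:ℝ) ^ 2 = (k:ℝ) := Real.sq_sqrt (by positivity)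
  unfold bb; nlinarith

lemma bb_nonneg (k : ℕ) : 0 ≤ bb k :=
  sub_nonneg.mpr (Real.sqrt_le_sqrt (by push_cast; linarith))

lemma bb_antitone : Antitone bb := by
  intro j k hjk
  rw [bb_eq, bb_eq]
  have h1 : (0:ℝ) < Real.sqrt (j+1) + Real.sqrt j := by
    have := Real.sqrt_pos.mpr (show (0:ℝ) < j+1 by positivity)
    have := Real.sqrt_nonneg (j:ℝ); linarith
  have h2 : Real.sqrt (j+1) + Real.sqrt j ≤ Real.sqrt (k+1) + Real.sqrt k := by
    have c1 : Real.sqrt (j+1) ≤ Real.sqrt (k+1) := Real.sqrt_le_sqrt (by push_cast; linarith [(Nat.cast_le (α := ℝ)).mpr hjk])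
    have c2 : Real.sqrt (j:ℝ) ≤ Real.sqrt (k:ℝ) := Real.sqrt_le_sqrt (Nat.cast_le.mpr hjk)
    linarith
  exact one_div_le_one_div_of_le h1 h2

lemma bb_telescope (n : ℕ) : ∑ k ∈ range n, bb k = Real.sqrt n := by
  have := Finset.sum_range_sub (fun k => Real.sqrt k) n
  simp only [bb]
  push_cast at this ⊢
  rw [this]; simp

lemma bb_le (k : ℕ) : bb (k+1) ≤ 1/(2*Real.sqrt (k+1)) := by
  rw [bb_eq]
  have h1 : (0:ℝ) < Real.sqrt (k+1) := Real.sqrt_pos.mpr (by positivity)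
  have h2 : Real.sqrt (k+1) ≤ Real.sqrt (k+1+1) := Real.sqrt_le_sqrt (by push_cast; linarith)
  apply one_div_le_one_div_of_le (by linarith)
  push_cast; push_cast at h2; linarith

lemma bb_ge (k : ℕ) : 1/(2*Real.sqrt (k+1)) ≤ bb k := by
  rw [bb_eq]
  have h1 : (0:ℝ) < Real.sqrt (k+1) := Real.sqrt_pos.mpr (by positivity)
  apply one_div_le_one_div_of_le
  · have : (0:ℝ) ≤ Real.sqrt (k:ℝ) := Real.sqrt_nonneg _
    linarith [Real.sqrt_nonneg ((k:ℝ)+1), h1]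
  · have h2 : Real.sqrt (k:ℝ) ≤ Real.sqrt ((k:ℝ)+1) := Real.sqrt_le_sqrt (by linarith)
    linarith

lemma bb_sq_ge (k : ℕ) : 1/(4*((k:ℝ)+1)) ≤ bb k ^ 2 := by
  have h := bb_ge k
  have h1 : (0:ℝ) < Real.sqrt (k+1) := Real.sqrt_pos.mpr (by positivity)
  have h0 : 0 ≤ 1/(2*Real.sqrt (k+1)) := by positivity
  have := mul_self_le_mul_self h0 h
  have hsq : Real.sqrt ((k:ℝ)+1) ^ 2 = (k:ℝ)+1 := Real.sq_sqrt (by positivity)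
  calc 1/(4*((k:ℝ)+1)) = (1/(2*Real.sqrt (k+1))) * (1/(2*Real.sqrt (k+1))) := by
        field_simp; nlinarith
    _ ≤ bb k * bb k := this
    _ = bb k ^ 2 := (sq (bb k)).symm

lemma bb_sq_le (k : ℕ) : bb (k+1) ^ 2 ≤ 1/(4*((k:ℝ)+1)) := by
  have h := bb_le k
  have h1 : (0:ℝ) < Real.sqrt (k+1) := Real.sqrt_pos.mpr (by positivity)
  have h0 : 0 ≤ bb (k+1) := bb_nonneg _
  have := mul_self_le_mul_self h0 h
  have hsq : Real.sqrt ((k:ℝ)+1) ^ 2 = (k:ℝ)+1 := Real.sq_sqrt (by positivity)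
  calc bb (k+1) ^ 2 = bb (k+1) * bb (k+1) := sq (bb (k+1))
    _ ≤ (1/(2*Real.sqrt (k+1))) * (1/(2*Real.sqrt (k+1))) := this
    _ = 1/(4*((k:ℝ)+1)) := by field_simp; nlinarith

lemma D_ge (m : ℕ) : Real.log (m+1) / 4 ≤ ∑ k ∈ range m, bb k ^ 2 := by
  have h1 : ∑ k ∈ range m, 1/(4*((k:ℝ)+1)) ≤ ∑ k ∈ range m, bb k ^ 2 :=
    Finset.sum_le_sum (fun k _ => bb_sq_ge k)
  have h2 : ∑ k ∈ range m, 1/(4*((k:ℝ)+1)) = (∑ k ∈ range m, 1/((k:ℝ)+1))/4 := by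
    rw [Finset.sum_div]; apply Finset.sum_congr rfl; intro k _; field_simp
  have h3 := le_harmonic m
  rw [h2] at h1; linarith

lemma D_le (m : ℕ) (hm : 1 ≤ m) : ∑ k ∈ range m, bb k ^ 2 ≤ (5 + Real.log m) / 4 := by
  obtain ⟨n, rfl⟩ : ∃ n, m = n + 1 := ⟨m - 1, by omega⟩
  rw [Finset.sum_range_succ']
  have hb0 : bb 0 ^ 2 = 1 := by unfold bb; norm_num
  rw [hb0]
  have h1 : ∑ k ∈ range n, bb (k+1) ^ 2 ≤ ∑ k ∈ range n, 1/(4*((k:ℝ)+1)) :=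
    Finset.sum_le_sum (fun k _ => bb_sq_le k)
  have h2 : ∑ k ∈ range n, 1/(4*((k:ℝ)+1)) = (∑ k ∈ range n, 1/((k:ℝ)+1))/4 := by
    rw [Finset.sum_div]; apply Finset.sum_congr rfl; intro k _; field_simp
  rcases Nat.eq_zero_or_pos n with h | h
  · subst h; norm_num
  · have h3 := harmonic_le n h
    have h4 : Real.log n ≤ Real.log (n+1) := by
      apply Real.log_le_log (by exact_mod_cast h); push_cast; linarith
    push_cast at h3 h4 ⊢
    linarith [h1, h2 ▸ h1]

lemma key_seq (m : ℕ) (hm : 1 ≤ m) (a : ℕ → ℝ) (ha : Antitone a)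
    (ha0 : ∀ k, m ≤ k → a k = 0)
    (hQ : 0 < ∑ j ∈ range m, a j ^ 2) :
    ∃ k, 1 ≤ k ∧ k ≤ m ∧
      2 * Real.sqrt (∑ j ∈ range m, a j ^ 2) / Real.sqrt (6 + Real.log m) * Real.sqrt k
        ≤ ∑ j ∈ range k, a j := by
  by_contra hcon
  push_neg at hcon
  set Q := ∑ j ∈ range m, a j ^ 2 with hQdef
  set t := 2 * Real.sqrt Q / Real.sqrt (6 + Real.log m) with htdef
  have hQnn : (0:ℝ) ≤ Q := le_of_lt hQ
  have hann : ∀ k, 0 ≤ a k := by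
    intro k
    have h1 : a (k ⊔ m) ≤ a k := ha le_sup_left
    rw [ha0 _ le_sup_right] at h1
    exact h1
  have h1 : ∑ k ∈ range m, (a k - a (k+1)) * (∑ j ∈ range (k+1), a j) = Q := by
    rw [abel_id a (fun k => ∑ j ∈ range k, a j) m, ha0 m le_rfl]
    simp only [Finset.range_zero, Finset.sum_empty, zero_mul, mul_zero, sub_zero, add_zero]
    exact Finset.sum_congr rfl (fun k _ => by rw [Finset.sum_range_succ]; ring)
  have h2 : ∑ k ∈ range m, (a k - a (k+1)) * (∑ j ∈ range (k+1), a j)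
          ≤ ∑ k ∈ range m, (a k - a (k+1)) * (t * Real.sqrt ((k+1 : ℕ))) := by
    apply Finset.sum_le_sum; intro k hk
    have hk' : k + 1 ≤ m := Finset.mem_range.mp hk
    exact mul_le_mul_of_nonneg_left (le_of_lt (hcon (k+1) (by omega) hk'))
      (sub_nonneg.mpr (ha (Nat.le_succ k)))
  have h3 : ∑ k ∈ range m, (a k - a (k+1)) * (t * Real.sqrt ((k+1 : ℕ)))
          = t * ∑ k ∈ range m, a k * bb k := by
    have hid2 := abel_id a (fun k => Real.sqrt k) m
    rw [ha0 m le_rfl] at hid2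
    simp only [Nat.cast_zero, Real.sqrt_zero, mul_zero, zero_mul, sub_zero, add_zero] at hid2
    calc ∑ k ∈ range m, (a k - a (k+1)) * (t * Real.sqrt ((k+1 : ℕ)))
        = t * ∑ k ∈ range m, (a k - a (k+1)) * Real.sqrt ((k+1 : ℕ)) := by
          rw [Finset.mul_sum]; exact Finset.sum_congr rfl (fun k _ => by ring)
      _ = t * ∑ k ∈ range m, a k * bb k := by
          rw [hid2]
          congr 1
          apply Finset.sum_congr rfl
          intro k _
          have : bb k = Real.sqrt ((k+1 : ℕ)) - Real.sqrt (k : ℕ) := by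
            unfold bb; push_cast; ring_nf
          rw [this]
  have h4 : ∑ k ∈ range m, a k * bb k
      ≤ Real.sqrt Q * Real.sqrt (∑ k ∈ range m, bb k ^ 2) := by
    have hcs := Finset.sum_mul_sq_le_sq_mul_sq (range m) a bb
    have hnn : 0 ≤ ∑ k ∈ range m, a k * bb k :=
      Finset.sum_nonneg fun k _ => mul_nonneg (hann k) (bb_nonneg k)
    calc ∑ k ∈ range m, a k * bb k
        = Real.sqrt ((∑ k ∈ range m, a k * bb k) ^ 2) := (Real.sqrt_sq hnn).symm
      _ ≤ Real.sqrt (Q * ∑ k ∈ range m, bb k ^ 2) := Real.sqrt_le_sqrt hcs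
      _ = Real.sqrt Q * Real.sqrt (∑ k ∈ range m, bb k ^ 2) := Real.sqrt_mul hQnn _
  have hLnn : (0:ℝ) ≤ Real.log m := Real.log_nonneg (by exact_mod_cast hm)
  have h5 : Real.sqrt (∑ k ∈ range m, bb k ^ 2) ≤ Real.sqrt (5 + Real.log m) / 2 := by
    calc Real.sqrt (∑ k ∈ range m, bb k ^ 2)
        ≤ Real.sqrt ((5 + Real.log m)/4) := Real.sqrt_le_sqrt (D_le m hm)
      _ = Real.sqrt (5 + Real.log m) / 2 := by
          rw [Real.sqrt_div (by linarith) 4,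
            show (4:ℝ) = 2^2 by norm_num, Real.sqrt_sq (by norm_num : (0:ℝ) ≤ 2)]
  -- combine
  set u := Real.sqrt Q with hu
  set v := Real.sqrt (5 + Real.log m) with hv
  set w := Real.sqrt (6 + Real.log m) with hw
  have hupos : 0 < u := Real.sqrt_pos.mpr hQ
  have hwpos : 0 < w := Real.sqrt_pos.mpr (by linarith)
  have hvw : v < w := Real.sqrt_lt_sqrt (by linarith) (by linarith)
  have huu : u * u = Q := Real.mul_self_sqrt hQnn
  have hvnn : 0 ≤ v := Real.sqrt_nonneg _
  have hchain : Q ≤ t * (u * (v / 2)) := by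
    calc Q = ∑ k ∈ range m, (a k - a (k+1)) * (∑ j ∈ range (k+1), a j) := h1.symm
      _ ≤ ∑ k ∈ range m, (a k - a (k+1)) * (t * Real.sqrt ((k+1 : ℕ))) := h2
      _ = t * ∑ k ∈ range m, a k * bb k := h3
      _ ≤ t * (u * (v / 2)) := by
          apply mul_le_mul_of_nonneg_left _ (by positivity)
          calc ∑ k ∈ range m, a k * bb k
              ≤ u * Real.sqrt (∑ k ∈ range m, bb k ^ 2) := h4
            _ ≤ u * (v / 2) := mul_le_mul_of_nonneg_left h5 (le_of_lt hupos)
  have heq : t * (u * (v / 2)) = Q * v / w := by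
    rw [htdef, ← huu]; ring
  rw [heq] at hchain
  have : Q * v / w < Q := by
    rw [div_lt_iff₀ hwpos]
    calc Q * v < Q * w := by exact mul_lt_mul_of_pos_left hvw hQ
      _ = Q * w := rfl
  linarith

lemma fin_strictMono_le {k : ℕ} (f : Fin k → ℕ) (hf : StrictMono f) :
    ∀ j : Fin k, (j : ℕ) ≤ f j := by
  intro j
  obtain ⟨n, hn⟩ := j
  revert hn
  induction n with
  | zero => intro hn; exact Nat.zero_le _
  | succ i ih =>
    intro hn
    have hi : i < k := by omega
    have h := hf (show (⟨i, hi⟩ : Fin k) < ⟨i+1, hn⟩ from by simp [Fin.lt_def])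
    exact Nat.succ_le_of_lt (lt_of_le_of_lt (ih hi) h)

lemma sum_finset_le (g : ℕ → ℝ) (hg : Antitone g) (T : Finset ℕ) :
    ∑ i ∈ T, g i ≤ ∑ j ∈ range T.card, g j := by
  set k := T.card with hk
  let e := T.orderIsoOfFin hk.symm
  have hmono : StrictMono (fun j : Fin k => ((e j : ℕ))) :=
    fun x y hxy => by exact_mod_cast e.strictMono hxy
  have hle := fin_strictMono_le _ hmono
  calc ∑ i ∈ T, g i = ∑ j : Fin k, g (e j) := by
        rw [← Finset.sum_coe_sort T g]
        exact (Equiv.sum_comp e.toEquiv (fun x : T => g x)).symm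
    _ ≤ ∑ j : Fin k, g j := Finset.sum_le_sum (fun j _ => hg (hle j))
    _ = ∑ j ∈ range k, g j := Fin.sum_univ_eq_sum_range _ _

lemma euclid_inner (m : ℕ) (x y : EuclideanSpace ℝ (Fin m)) :
    (inner ℝ x y : ℝ) = ∑ i, x i * y i := by
  rw [PiLp.inner_apply]
  exact Finset.sum_congr rfl (fun i _ => by simp [RCLike.inner_apply, mul_comm])

lemma euclid_normsq (m : ℕ) (x : EuclideanSpace ℝ (Fin m)) :
    ‖x‖ ^ 2 = ∑ i, x i ^ 2 := by
  rw [← real_inner_self_eq_norm_sq, euclid_inner]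
  exact Finset.sum_congr rfl (fun i _ => (sq (x i)).symm)

lemma A_finite (m : ℕ) : (A m).Finite := by
  have h : A m ⊆ WithLp.toLp 2 '' Set.univ.pi (fun _ : Fin m => ({-1,0,1} : Set ℝ)) := by
    intro v hv
    refine ⟨WithLp.ofLp v, fun i _ => ?_, rfl⟩
    rcases hv.1 i with h|h|h <;> simp [h]
  exact Set.Finite.subset ((Set.Finite.pi (fun i =>
    (Set.finite_singleton _).insert _ |>.insert _)).image _) h

lemma B_finite (m : ℕ) : (B m).Finite := (A_finite m).image _

lemma support_lemma (m : ℕ) (hm : 1 ≤ m) (w : EuclideanSpace ℝ (Fin m)) (hw : w ≠ 0) :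
    ∃ p ∈ B m, 2 * ‖w‖ / Real.sqrt (6 + Real.log m) ≤ (inner ℝ w p : ℝ) := by
  classical
  set σ := Tuple.sort (fun i => -|w i|) with hσdef
  have hσ : Monotone ((fun i : Fin m => -|w i|) ∘ σ) := Tuple.monotone_sort _
  set a : ℕ → ℝ := fun k => if h : k < m then |w (σ ⟨k, h⟩)| else 0 with hadef
  have ha : Antitone a := by
    intro j k hjk
    by_cases hk : k < m
    · have hj : j < m := lt_of_le_of_lt hjk hk
      simp only [hadef, dif_pos hk, dif_pos hj]
      have := hσ (show (⟨j, hj⟩ : Fin m) ≤ ⟨k, hk⟩ from hjk)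
      simpa using this
    · simp only [hadef, dif_neg hk]
      by_cases hj : j < m
      · simp only [dif_pos hj]; positivity
      · simp only [dif_neg hj]; exact le_refl 0
  have ha0 : ∀ k, m ≤ k → a k = 0 := fun k hk => by
    simp only [hadef, dif_neg (Nat.not_lt.mpr hk)]
  have hQ : ∑ j ∈ range m, a j ^ 2 = ‖w‖ ^ 2 := by
    rw [← Fin.sum_univ_eq_sum_range (fun j => a j ^ 2) m]
    have e1 : ∀ j : Fin m, a (j : ℕ) ^ 2 = |w (σ j)| ^ 2 := fun j => by
      simp only [hadef, dif_pos j.isLt, Fin.eta]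
    rw [Finset.sum_congr rfl (fun j _ => e1 j)]
    have := Equiv.sum_comp σ (fun i => |w i| ^ 2)
    rw [this, euclid_normsq]
    exact Finset.sum_congr rfl (fun i _ => sq_abs _)
  have hwpos : (0:ℝ) < ‖w‖ := norm_pos_iff.mpr hw
  obtain ⟨k, hk1, hkm, hineq⟩ := key_seq m hm a ha ha0 (by rw [hQ]; positivity)
  rw [hQ, Real.sqrt_sq (norm_nonneg w)] at hineq
  set t := 2 * ‖w‖ / Real.sqrt (6 + Real.log m) with htdef
  -- build the index set T and vector v
  set ι : Fin k → Fin m := fun j => σ (Fin.castLE hkm j) with hιdef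
  have hinj : Function.Injective ι :=
    σ.injective.comp (Fin.castLE_injective hkm)
  set T : Finset (Fin m) := Finset.image ι Finset.univ with hTdef
  have hcard : T.card = k := by
    rw [hTdef, Finset.card_image_of_injective _ hinj, Finset.card_univ, Fintype.card_fin]
  have hsumT : ∑ i ∈ T, |w i| = ∑ j ∈ range k, a j := by
    rw [hTdef, Finset.sum_image (fun x _ y _ h => hinj h),
      ← Fin.sum_univ_eq_sum_range (fun j => a j) k]
    apply Finset.sum_congr rfl
    intro j _
    have hj : (j : ℕ) < m := lt_of_lt_of_le j.isLt hkm
    simp only [hadef, dif_pos hj, hιdef]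
    rfl
  set v : EuclideanSpace ℝ (Fin m) :=
    WithLp.toLp 2 (fun i => if i ∈ T then (if w i < 0 then (-1:ℝ) else 1) else 0) with hvdef
  have hvval : ∀ i, v i = if i ∈ T then (if w i < 0 then (-1:ℝ) else 1) else 0 := fun i => rfl
  have hvA : v ∈ A m := by
    constructor
    · intro i
      rw [hvval i]
      by_cases hi : i ∈ T
      · by_cases hwi : w i < 0
        · left; simp [hi, hwi]
        · right; right; simp [hi, hwi]
      · right; left; simp [hi]
    · have hT0 : T.Nonempty := Finset.card_pos.mp (by rw [hcard]; omega)
      obtain ⟨i0, hi0⟩ := hT0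
      intro h0
      have : v i0 = 0 := by rw [h0]; rfl
      rw [hvval i0, if_pos hi0] at this
      by_cases hwi : w i0 < 0 <;> simp [hwi] at this
  have hnormv : ‖v‖ = Real.sqrt k := by
    rw [EuclideanSpace.norm_eq]
    congr 1
    have e2 : ∀ i, ‖v i‖ ^ 2 = if i ∈ T then (1:ℝ) else 0 := by
      intro i
      rw [hvval i]
      by_cases hi : i ∈ T
      · by_cases hwi : w i < 0 <;> simp [hi, hwi]
      · simp [hi]
    rw [Finset.sum_congr rfl (fun i _ => e2 i), Finset.sum_ite_mem, Finset.univ_inter,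
      Finset.sum_const, hcard]
    simp
  have hinnerv : (inner ℝ w v : ℝ) = ∑ i ∈ T, |w i| := by
    rw [euclid_inner]
    have e3 : ∀ i, w i * v i = if i ∈ T then |w i| else 0 := by
      intro i
      rw [hvval i]
      by_cases hi : i ∈ T
      · by_cases hwi : w i < 0
        · simp only [hi, if_pos, hwi, if_true]
          rw [abs_of_neg hwi]; ring
        · simp only [hi, if_pos, hwi, if_false]
          rw [abs_of_nonneg (not_lt.mp hwi)]; ring
      · simp [hi]
    rw [Finset.sum_congr rfl (fun i _ => e3 i), Finset.sum_ite_mem, Finset.univ_inter]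
  refine ⟨‖v‖⁻¹ • v, ⟨v, hvA, rfl⟩, ?_⟩
  rw [real_inner_smul_right, hnormv, hinnerv, hsumT]
  have hsk : (0:ℝ) < Real.sqrt k := Real.sqrt_pos.mpr (by exact_mod_cast hk1)

  calc t = (Real.sqrt k)⁻¹ * (t * Real.sqrt k) := by field_simp
    _ ≤ (Real.sqrt k)⁻¹ * ∑ j ∈ range k, a j := by
        apply mul_le_mul_of_nonneg_left hineq (by positivity)

lemma ball_subset (m : ℕ) (hm : 1 ≤ m) :
    Metric.closedBall (0 : EuclideanSpace ℝ (Fin m)) (2 / Real.sqrt (6 + Real.log m))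
      ⊆ convexHull ℝ (B m) := by
  intro x hx
  by_contra hxC
  have hclosed : IsClosed (convexHull ℝ (B m)) := (B_finite m).isClosed_convexHull ℝ
  obtain ⟨f, u, hfu, hux⟩ :=
    geometric_hahn_banach_closed_point (convex_convexHull ℝ (B m)) hclosed hxC
  set w := (InnerProductSpace.toDual ℝ (EuclideanSpace ℝ (Fin m))).symm f with hwdef
  have hwf : ∀ y, (inner ℝ w y : ℝ) = f y := fun y => InnerProductSpace.toDual_symm_apply
  have hBne : ∃ p, p ∈ B m := by
    set v1 : EuclideanSpace ℝ (Fin m) := WithLp.toLp 2 (fun _ => (1:ℝ)) with hv1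
    refine ⟨‖v1‖⁻¹ • v1, v1, ⟨fun i => by right; right; rfl, ?_⟩, rfl⟩
    intro h0
    have : v1 ⟨0, hm⟩ = 0 := by rw [h0]; rfl
    simp [hv1] at this
  have hw0 : w ≠ 0 := by
    intro h
    obtain ⟨p, hp⟩ := hBne
    have h1 : f p < u := hfu p (subset_convexHull ℝ _ hp)
    have h2 : f p = 0 := by rw [← hwf p, h, inner_zero_left]
    have h3 : f x = 0 := by rw [← hwf x, h, inner_zero_left]
    rw [h2] at h1; rw [h3] at hux; linarith
  obtain ⟨p, hp, hip⟩ := support_lemma m hm w hw0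
  have h1 : f p < u := hfu p (subset_convexHull ℝ _ hp)
  have h2 : (inner ℝ w x : ℝ) ≤ ‖w‖ * ‖x‖ := real_inner_le_norm w x
  have hxnorm : ‖x‖ ≤ 2 / Real.sqrt (6 + Real.log m) := by
    rwa [Metric.mem_closedBall, dist_zero_right] at hx
  have h3 : ‖w‖ * ‖x‖ ≤ 2 * ‖w‖ / Real.sqrt (6 + Real.log m) := by
    have := mul_le_mul_of_nonneg_left hxnorm (norm_nonneg w)
    calc ‖w‖ * ‖x‖ ≤ ‖w‖ * (2 / Real.sqrt (6 + Real.log m)) := this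
      _ = 2 * ‖w‖ / Real.sqrt (6 + Real.log m) := by ring
  have h4 : f x ≤ f p := by
    rw [← hwf x, ← hwf p]
    calc (inner ℝ w x : ℝ) ≤ 2 * ‖w‖ / Real.sqrt (6 + Real.log m) := le_trans h2 h3
      _ ≤ (inner ℝ w p : ℝ) := hip
  linarith

lemma upper_bound (m : ℕ) (hm : 1 ≤ m) {r : ℝ} (hr : 0 ≤ r)
    (hsub : Metric.closedBall (0 : EuclideanSpace ℝ (Fin m)) r ⊆ convexHull ℝ (B m)) :
    r ≤ 2 / Real.sqrt (Real.log (m+1)) := by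
  classical
  set u : EuclideanSpace ℝ (Fin m) := WithLp.toLp 2 (fun i => bb (i : ℕ)) with hudef
  have huval : ∀ i : Fin m, u i = bb (i : ℕ) := fun _ => rfl
  -- the convex hull lies in a halfspace
  have hlin : IsLinearMap ℝ (fun x : EuclideanSpace ℝ (Fin m) => (inner ℝ u x : ℝ)) := by
    constructor
    · intro a b; exact inner_add_right u a b
    · intro c a; rw [real_inner_smul_right]; rfl
  have hBhalf : B m ⊆ {x : EuclideanSpace ℝ (Fin m) | (inner ℝ u x : ℝ) ≤ 1} := by
    rintro p ⟨v, hvA, rfl⟩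
    set T : Finset (Fin m) := Finset.univ.filter (fun i => v i ≠ 0) with hTdef
    have hmemT : ∀ i, i ∈ T ↔ v i ≠ 0 := fun i => by
      simp [hTdef]
    have hTne : T.Nonempty := by
      by_contra h
      rw [Finset.not_nonempty_iff_eq_empty] at h
      apply hvA.2
      ext i
      have : i ∉ T := h ▸ Finset.notMem_empty i
      rw [hmemT i, not_not] at this
      simpa using this
    set k := T.card with hkdef
    have hk1 : 1 ≤ k := Finset.card_pos.mpr hTne
    have hnormv : ‖v‖ = Real.sqrt k := by
      rw [EuclideanSpace.norm_eq]
      congr 1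
      have e2 : ∀ i, ‖v i‖ ^ 2 = if i ∈ T then (1:ℝ) else 0 := by
        intro i
        by_cases hi : i ∈ T
        · rcases hvA.1 i with h|h|h
          · simp [hi, h]
          · exact absurd h ((hmemT i).mp hi)
          · simp [hi, h]
        · have := (hmemT i).not.mp hi
          rw [not_not] at this
          simp [hi, this]
      rw [Finset.sum_congr rfl (fun i _ => e2 i), Finset.sum_ite_mem, Finset.univ_inter,
        Finset.sum_const]
      simp [hkdef]
    have hvpos : (0:ℝ) < Real.sqrt k := Real.sqrt_pos.mpr (by exact_mod_cast hk1)
    -- bound the inner product with v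
    have hinnerv : (inner ℝ u v : ℝ) ≤ Real.sqrt k := by
      rw [euclid_inner]
      have step1 : ∑ i, u i * v i ≤ ∑ i, (if i ∈ T then bb (i:ℕ) else 0) := by
        apply Finset.sum_le_sum
        intro i _
        rcases hvA.1 i with h|h|h
        · have hiT : i ∈ T := (hmemT i).mpr (by rw [h]; norm_num)
          rw [huval i, h, if_pos hiT]
          have := bb_nonneg (i:ℕ); linarith
        · have hiT : i ∉ T := by rw [hmemT i, not_not]; exact h
          rw [huval i, h, if_neg hiT, mul_zero]
        · have hiT : i ∈ T := (hmemT i).mpr (by rw [h]; norm_num)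
          rw [huval i, h, if_pos hiT, mul_one]
      have step2 : ∑ i, (if i ∈ T then bb (i:ℕ) else 0) = ∑ i ∈ T, bb (i:ℕ) := by
        rw [Finset.sum_ite_mem, Finset.univ_inter]
      have step3 : ∑ i ∈ T, bb (i:ℕ) = ∑ n ∈ T.image (Fin.val), bb n := by
        rw [Finset.sum_image (fun x _ y _ h => Fin.val_injective h)]
      have step4 : ∑ n ∈ T.image (Fin.val), bb n
          ≤ ∑ j ∈ range ((T.image (Fin.val)).card), bb j :=
        sum_finset_le bb bb_antitone _
      have hcard2 : (T.image (Fin.val)).card = k := by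
        rw [Finset.card_image_of_injective _ Fin.val_injective]
      rw [hcard2] at step4
      rw [bb_telescope k] at step4
      linarith [step1, step2 ▸ step1]
    show (inner ℝ u (‖v‖⁻¹ • v) : ℝ) ≤ 1
    rw [real_inner_smul_right, hnormv]
    calc (Real.sqrt k)⁻¹ * (inner ℝ u v : ℝ)
        ≤ (Real.sqrt k)⁻¹ * Real.sqrt k :=
          mul_le_mul_of_nonneg_left hinnerv (inv_nonneg.mpr hvpos.le)
      _ = 1 := inv_mul_cancel₀ (ne_of_gt hvpos)
  have hChalf := convexHull_min hBhalf (convex_halfSpace_le hlin 1)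
  have hu0 : u ≠ 0 := by
    intro h
    have h0 : u ⟨0, hm⟩ = 0 := by rw [h]; rfl
    rw [huval] at h0
    simp [bb] at h0
  have hupos : (0:ℝ) < ‖u‖ := norm_pos_iff.mpr hu0
  set x := (r * ‖u‖⁻¹) • u with hxdef
  have hxball : x ∈ Metric.closedBall (0 : EuclideanSpace ℝ (Fin m)) r := by
    rw [Metric.mem_closedBall, dist_zero_right, hxdef, norm_smul, Real.norm_eq_abs,
      abs_of_nonneg (by positivity), mul_assoc, inv_mul_cancel₀ (ne_of_gt hupos), mul_one]
  have hx1 : (inner ℝ u x : ℝ) ≤ 1 := hChalf (hsub hxball)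
  rw [hxdef, real_inner_smul_right, real_inner_self_eq_norm_sq] at hx1
  have hx2 : r * ‖u‖ ≤ 1 := by
    have heq : r * ‖u‖⁻¹ * ‖u‖^2 = r * ‖u‖ := by
      field_simp
    rw [heq] at hx1
    exact hx1
  have hlogpos : (0:ℝ) < Real.log (m+1) := by
    apply Real.log_pos
    have : (1:ℝ) ≤ (m:ℝ) := by exact_mod_cast hm
    linarith
  have hDlow : Real.sqrt (Real.log (m+1)) / 2 ≤ ‖u‖ := by
    have h1 : ‖u‖^2 = ∑ j ∈ range m, bb j ^ 2 := by
      rw [euclid_normsq, ← Fin.sum_univ_eq_sum_range (fun j => bb j ^ 2) m]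
    have h2 := D_ge m
    have h3 : ‖u‖ = Real.sqrt (‖u‖^2) := (Real.sqrt_sq (norm_nonneg u)).symm
    rw [h3, h1]
    calc Real.sqrt (Real.log (m+1)) / 2
        = Real.sqrt (Real.log (m+1) / 4) := by
          rw [Real.sqrt_div hlogpos.le 4,
            show (4:ℝ) = 2^2 by norm_num, Real.sqrt_sq (by norm_num : (0:ℝ) ≤ 2)]
      _ ≤ Real.sqrt (∑ j ∈ range m, bb j ^ 2) := Real.sqrt_le_sqrt h2
  have h5 : (0:ℝ) < Real.sqrt (Real.log (m+1)) := Real.sqrt_pos.mpr hlogpos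
  have h6 : r ≤ 1 / ‖u‖ := by
    rw [le_div_iff₀ hupos]; exact hx2
  calc r ≤ 1 / ‖u‖ := h6
    _ ≤ 1 / (Real.sqrt (Real.log (m+1)) / 2) :=
        one_div_le_one_div_of_le (by positivity) hDlow
    _ = 2 / Real.sqrt (Real.log (m+1)) := one_div_div _ _

lemma s_lb (m : ℕ) (hm : 1 ≤ m) : 2 / Real.sqrt (6 + Real.log m) ≤ s m := by
  have hLnn : (0:ℝ) ≤ Real.log m := Real.log_nonneg (by exact_mod_cast hm)
  apply le_csSup
  · exact ⟨2 / Real.sqrt (Real.log (m+1)), fun r hr => upper_bound m hm hr.1 hr.2⟩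
  · exact ⟨by positivity, ball_subset m hm⟩

lemma s_ub (m : ℕ) (hm : 1 ≤ m) : s m ≤ 2 / Real.sqrt (Real.log (m+1)) := by
  have hLnn : (0:ℝ) ≤ Real.log m := Real.log_nonneg (by exact_mod_cast hm)
  apply csSup_le
  · exact ⟨2 / Real.sqrt (6 + Real.log m), by positivity, ball_subset m hm⟩
  · exact fun r hr => upper_bound m hm hr.1 hr.2

theorem stmt12 :
    Filter.Tendsto (fun m : ℕ => s m * Real.sqrt (Real.log m)) Filter.atTop (nhds 2) := by
  have l2 : Filter.Tendsto (fun m : ℕ => Real.log m) Filter.atTop Filter.atTop :=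
    Real.tendsto_log_atTop.comp tendsto_natCast_atTop_atTop
  have l1 : Filter.Tendsto (fun x : ℝ => x / (6 + x)) Filter.atTop (nhds 1) := by
    have h0 : Filter.Tendsto (fun x : ℝ => 6 / x + 1) Filter.atTop (nhds 1) := by
      have : Filter.Tendsto (fun x : ℝ => 6 / x) Filter.atTop (nhds 0) := by
        simpa [div_eq_mul_inv] using tendsto_inv_atTop_zero.const_mul (6:ℝ)
      simpa using this.add tendsto_const_nhds
    have h1 : Filter.Tendsto (fun x : ℝ => (6 / x + 1)⁻¹) Filter.atTop (nhds 1) := by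
      simpa using h0.inv₀ one_ne_zero
    apply h1.congr'
    filter_upwards [Filter.eventually_gt_atTop (0:ℝ)] with x hx
    field_simp
  have lg : Filter.Tendsto (fun m : ℕ => 2 * Real.sqrt (Real.log m / (6 + Real.log m)))
      Filter.atTop (nhds 2) := by
    have h2 : Filter.Tendsto (fun m : ℕ => Real.log m / (6 + Real.log m))
        Filter.atTop (nhds 1) := l1.comp l2
    have h3 := (Real.continuous_sqrt.tendsto 1).comp h2
    have h4 : Filter.Tendsto (fun m : ℕ => Real.sqrt (Real.log m / (6 + Real.log m)))
        Filter.atTop (nhds 1) := by simpa [Function.comp_def] using h3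
    simpa using h4.const_mul (2:ℝ)
  apply tendsto_of_tendsto_of_tendsto_of_le_of_le' lg tendsto_const_nhds
  · filter_upwards [Filter.eventually_ge_atTop 1] with m hm
    have hLnn : (0:ℝ) ≤ Real.log m := Real.log_nonneg (by exact_mod_cast hm)
    have h1 := s_lb m hm
    have h2 : 2 * Real.sqrt (Real.log m / (6 + Real.log m))
        = 2 / Real.sqrt (6 + Real.log m) * Real.sqrt (Real.log m) := by
      rw [Real.sqrt_div hLnn]
      ring
    rw [h2]
    exact mul_le_mul_of_nonneg_right h1 (Real.sqrt_nonneg _)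
  · filter_upwards [Filter.eventually_ge_atTop 1] with m hm
    have hLnn : (0:ℝ) ≤ Real.log m := Real.log_nonneg (by exact_mod_cast hm)
    have h1 := s_ub m hm
    have hlogpos : (0:ℝ) < Real.log (m+1) := by
      apply Real.log_pos
      have : (1:ℝ) ≤ (m:ℝ) := by exact_mod_cast hm
      linarith
    have h5 : (0:ℝ) < Real.sqrt (Real.log (m+1)) := Real.sqrt_pos.mpr hlogpos
    have hmono : Real.sqrt (Real.log m) ≤ Real.sqrt (Real.log (m+1)) := by
      apply Real.sqrt_le_sqrt
      apply Real.log_le_log (by positivity)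
      linarith
    calc s m * Real.sqrt (Real.log m)
        ≤ 2 / Real.sqrt (Real.log (m+1)) * Real.sqrt (Real.log m) :=
          mul_le_mul_of_nonneg_right h1 (Real.sqrt_nonneg _)
      _ ≤ 2 / Real.sqrt (Real.log (m+1)) * Real.sqrt (Real.log (m+1)) :=
          mul_le_mul_of_nonneg_left hmono (by positivity)
      _ = 2 := by field_simp
end
end
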